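/- Suppose (X, Y) satisfies LSNMs in both directions with exponential noise: Y = f(X) + g(X)·E_Y with E_Y ~ Exponential(λ) independent of X, and X = h(Y) + k(Y)·E_X with E_X ~ Exponential(λ) independent of Y, with g, k > 0 differentiable and positive differentiable marginal densities. Then d/dx (1/g(x)) = d/dy (1/k(y)) for all x, y in the support, hence both derivatives equal a common constant c; consequently 1/g and 1/k are either both constant or both affine with the same slope c. -/
import Mathlib


/-- Identifiability with exponential noise: if the joint log-density equals that of an
exponential-noise LSNM in both directions, then (1/g)' is everywhere equal to (1/k)',
hence both are a common constant c; so 1/g and 1/k are both constant or both affine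
with the same slope. -/
theorem lsnm_exponential_identifiability (lam : ℝ) (hlam : 0 < lam)
    (pX pY f g h k : ℝ → ℝ)
    (hpX : Differentiable ℝ pX) (hpY : Differentiable ℝ pY)
    (hf : Differentiable ℝ f) (hh : Differentiable ℝ h)
    (hgdiff : Differentiable ℝ g) (hkdiff : Differentiable ℝ k)
    (hpXpos : ∀ x, 0 < pX x) (hpYpos : ∀ y, 0 < pY y)
    (hgpos : ∀ x, 0 < g x) (hkpos : ∀ y, 0 < k y)
    (hjoint : ∀ x y : ℝ,
      Real.log (pX x) + Real.log lam - Real.log (g x) - (lam / g x) * (y - f x)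
        = Real.log (pY y) + Real.log lam - Real.log (k y) - (lam / k y) * (x - h y)) :
    (∀ x y : ℝ, deriv (fun t => 1 / g t) x = deriv (fun t => 1 / k t) y) ∧
    ∃ c : ℝ, (∀ x, deriv (fun t => 1 / g t) x = c) ∧ (∀ y, deriv (fun t => 1 / k t) y = c) := by
  have hlam' : lam ≠ 0 := ne_of_gt hlam
  set β : ℝ := lam / k 1 - lam / k 0 with hβ
  set c₀ : ℝ := Real.log (pY 0) - Real.log (pY 1) + Real.log (k 1) - Real.log (k 0)
      - (lam / k 1) * h 1 + (lam / k 0) * h 0 with hc₀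
  set c₁ : ℝ := Real.log (pX 0) - Real.log (pX 1) + Real.log (g 1) - Real.log (g 0)
      - (lam / g 1) * f 1 + (lam / g 0) * f 0 with hc₁
  have hu : ∀ x, lam / g x = β * x + c₀ := by
    intro x
    linear_combination (hjoint x 0) - (hjoint x 1)
  have hv : ∀ y, lam / k y = β * y + c₁ := by
    intro y
    linear_combination (hjoint 1 y) - (hjoint 0 y) + y * (hu 1) - y * (hu 0)
  have hg1 : ∀ t, (1:ℝ) / g t = (β / lam) * t + c₀ / lam := by
    intro t
    have h1 : (1:ℝ) / g t = (lam / g t) / lam := by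
      rw [div_div, mul_comm (g t) lam, ← div_div, div_self hlam']
    rw [h1, hu t]
    ring
  have hk1 : ∀ t, (1:ℝ) / k t = (β / lam) * t + c₁ / lam := by
    intro t
    have h1 : (1:ℝ) / k t = (lam / k t) / lam := by
      rw [div_div, mul_comm (k t) lam, ← div_div, div_self hlam']
    rw [h1, hv t]
    ring
  have hgf : (fun t => 1 / g t) = fun t => (β / lam) * t + c₀ / lam := funext hg1
  have hkf : (fun t => 1 / k t) = fun t => (β / lam) * t + c₁ / lam := funext hk1
  have hdg : ∀ x, deriv (fun t => 1 / g t) x = β / lam := by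
    intro x
    rw [hgf]
    simpa using (((hasDerivAt_id x).const_mul (β / lam)).add_const (c₀ / lam)).deriv
  have hdk : ∀ y, deriv (fun t => 1 / k t) y = β / lam := by
    intro y
    rw [hkf]
    simpa using (((hasDerivAt_id y).const_mul (β / lam)).add_const (c₁ / lam)).deriv
  exact ⟨fun x y => by rw [hdg x, hdk y], ⟨β / lam, hdg, hdk⟩⟩
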